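/- Let m be a basic probability assignment on a finite nonempty set Θ with plausibility function Pl. Then the set T^{n−1}[Bel] = {p' : Θ → ℝ : ∑_{x∈Θ} p'(x) = 1 and p'(x) ≤ Pl(x) for all x ∈ Θ} equals the convex hull in the real vector space ℝ^Θ of the finite set of points {t^{n−1}_x : x ∈ Θ}, where t^{n−1}_x(x) = Pl(x) + 1 − k_Pl and t^{n−1}_x(y) = Pl(y) for y ≠ x. -/
import Mathlib


open Finset

/-- A basic probability assignment on a finite set `Θ`. -/
def IsBPA {Θ : Type*} [Fintype Θ] (m : Finset Θ → ℝ) : Prop :=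
  m ∅ = 0 ∧ (∀ A, 0 ≤ m A) ∧ (∑ A : Finset Θ, m A) = 1

/-- Belief function `Bel(A) = ∑_{B ⊆ A} m(B)`. -/
noncomputable def Bel {Θ : Type*} [Fintype Θ] [DecidableEq Θ] (m : Finset Θ → ℝ)
    (A : Finset Θ) : ℝ :=
  ∑ B ∈ A.powerset, m B

/-- Plausibility function `Pl(A) = ∑_{B ∩ A ≠ ∅} m(B)`. -/
noncomputable def Pl {Θ : Type*} [Fintype Θ] [DecidableEq Θ] (m : Finset Θ → ℝ)
    (A : Finset Θ) : ℝ :=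
  ∑ B ∈ Finset.univ.filter (fun B => B ∩ A ≠ ∅), m B

/-- Total mass of singletons `k_Bel`. -/
noncomputable def kBel {Θ : Type*} [Fintype Θ] (m : Finset Θ → ℝ) : ℝ :=
  ∑ x : Θ, m {x}

/-- Total plausibility of singletons `k_Pl`. -/
noncomputable def kPl {Θ : Type*} [Fintype Θ] [DecidableEq Θ] (m : Finset Θ → ℝ) : ℝ :=
  ∑ x : Θ, Pl m {x}

/-- `β[Bel] = (1 - k_Bel)/(k_Pl - k_Bel)`. -/
noncomputable def betaBel {Θ : Type*} [Fintype Θ] [DecidableEq Θ] (m : Finset Θ → ℝ) : ℝ :=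
  (1 - kBel m) / (kPl m - kBel m)

/-- The intersection probability `p[Bel](x) = m(x) + β[Bel]⬝(Pl(x) - m(x))`. -/
noncomputable def pInt {Θ : Type*} [Fintype Θ] [DecidableEq Θ] (m : Finset Θ → ℝ)
    (x : Θ) : ℝ :=
  m {x} + betaBel m * (Pl m {x} - m {x})

/-- Vertex `t^{n-1}_x` of the upper simplex: `t^{n-1}_x(x) = Pl(x) + 1 - k_Pl`,
`t^{n-1}_x(y) = Pl(y)` for `y ≠ x`. -/
noncomputable def upperVertex {Θ : Type*} [Fintype Θ] [DecidableEq Θ]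
    (m : Finset Θ → ℝ) (x : Θ) : Θ → ℝ :=
  fun y => if y = x then Pl m {y} + 1 - kPl m else Pl m {y}

/-- upper half of Theorem 2: the upper simplex
`T^{n-1}[Bel] = {p' : ∑ p' = 1, p'(x) ≤ Pl(x) ∀x}` is the convex hull of the
vertices `t^{n-1}_x`, `x ∈ Θ`. -/
lemma one_le_kPl {Θ : Type*} [Fintype Θ] [DecidableEq Θ] (m : Finset Θ → ℝ)
    (hm : IsBPA m) : 1 ≤ kPl m := by
  obtain ⟨h0, hpos, hsum⟩ := hm
  have hiff : ∀ (B : Finset Θ) (x : Θ), (B ∩ {x} ≠ ∅) ↔ x ∈ B := by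
    intro B x
    rw [← Finset.nonempty_iff_ne_empty]
    simp [Finset.Nonempty]
  have hswap : kPl m = ∑ B : Finset Θ, (B.card : ℝ) * m B := by
    unfold kPl Pl
    simp_rw [Finset.sum_filter]
    rw [Finset.sum_comm]
    refine Finset.sum_congr rfl fun B _ => ?_
    simp_rw [hiff]
    rw [Finset.sum_ite_mem, Finset.univ_inter, Finset.sum_const, nsmul_eq_mul]
  rw [hswap, ← hsum]
  refine Finset.sum_le_sum fun B _ => ?_
  rcases eq_or_ne B ∅ with h | h
  · simp [h, h0]
  · have : (1:ℝ) ≤ B.card := by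
      have := Finset.card_pos.mpr (Finset.nonempty_iff_ne_empty.mpr h)
      exact_mod_cast this
    nlinarith [hpos B]

theorem upperSimplex_eq_convexHull
    {Θ : Type*} [Fintype Θ] [DecidableEq Θ] [Nonempty Θ]
    (m : Finset Θ → ℝ) (hm : IsBPA m) :
    {p' : Θ → ℝ | (∑ x : Θ, p' x) = 1 ∧ ∀ x : Θ, p' x ≤ Pl m {x}} =
      convexHull ℝ (Set.range (upperVertex m)) := by
  have hk : 1 ≤ kPl m := one_le_kPl m hm
  have hsumPl : ∑ y : Θ, Pl m {y} = kPl m := rfl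
  apply Set.Subset.antisymm
  · intro p hp
    obtain ⟨hp1, hp2⟩ := hp
    rcases eq_or_lt_of_le hk with hk1 | hk1
    · -- kPl = 1 : p = Pl on singletons, equal to any vertex
      have hz : ∑ x : Θ, (Pl m {x} - p x) = 0 := by
        rw [Finset.sum_sub_distrib, hp1, hsumPl, ← hk1, sub_self]
      have hall : ∀ x : Θ, p x = Pl m {x} := by
        intro x
        have := (Finset.sum_eq_zero_iff_of_nonneg
          (fun y _ => sub_nonneg.mpr (hp2 y))).mp hz x (Finset.mem_univ x)
        linarith
      obtain ⟨x0⟩ := ‹Nonempty Θ›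
      apply subset_convexHull
      refine ⟨x0, funext fun y => ?_⟩
      simp only [upperVertex, ← hk1, hall y]
      split_ifs <;> ring
    · have hkpos : 0 < kPl m - 1 := sub_pos.mpr hk1
      set w : Θ → ℝ := fun x => (Pl m {x} - p x) / (kPl m - 1) with hw
      have hw0 : ∀ x ∈ Finset.univ (α := Θ), 0 ≤ w x :=
        fun x _ => div_nonneg (sub_nonneg.mpr (hp2 x)) hkpos.le
      have hw1 : ∑ x : Θ, w x = 1 := by
        rw [hw]
        simp only
        rw [← Finset.sum_div, Finset.sum_sub_distrib, hp1, hsumPl]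
        field_simp
      have hpe : Finset.univ.centerMass w (upperVertex m) = p := by
        rw [Finset.centerMass_eq_of_sum_1 _ _ hw1]
        funext y
        have happ : (∑ x : Θ, w x • upperVertex m x) y
            = ∑ x : Θ, w x * upperVertex m x y := by
          rw [Finset.sum_apply]; rfl
        rw [happ]
        have : ∀ x : Θ, w x * upperVertex m x y
            = w x * Pl m {y} + (if x = y then w x * (1 - kPl m) else 0) := by
          intro x
          unfold upperVertex
          rcases eq_or_ne y x with h | h
          · simp [h]; ring
          · simp [h, Ne.symm h]
        simp_rw [this]
        rw [Finset.sum_add_distrib, ← Finset.sum_mul, hw1,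
          Finset.sum_ite_eq' Finset.univ y (fun x => w x * (1 - kPl m)),
          if_pos (Finset.mem_univ y)]
        have hwy : w y * (kPl m - 1) = Pl m {y} - p y := by
          rw [hw]; field_simp
        nlinarith [hwy]
      rw [← hpe]
      exact Finset.centerMass_mem_convexHull _ hw0 (by rw [hw1]; norm_num)
        (fun i _ => Set.mem_range_self i)
  · apply convexHull_min
    · rintro _ ⟨x, rfl⟩
      constructor
      · have : ∀ y : Θ, upperVertex m x y
            = Pl m {y} + (if y = x then 1 - kPl m else 0) := by
          intro y; unfold upperVertex; split_ifs <;> ring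
        simp_rw [this]
        rw [Finset.sum_add_distrib, hsumPl,
          Finset.sum_ite_eq' Finset.univ x (fun _ => 1 - kPl m),
          if_pos (Finset.mem_univ x)]
        ring
      · intro y
        unfold upperVertex
        split_ifs
        · linarith
        · exact le_rfl
    · intro p hp q hq a b ha hb hab
      obtain ⟨hp1, hp2⟩ := hp
      obtain ⟨hq1, hq2⟩ := hq
      constructor
      · simp only [Pi.add_apply, Pi.smul_apply, smul_eq_mul]
        rw [Finset.sum_add_distrib, ← Finset.mul_sum, ← Finset.mul_sum, hp1, hq1]
        linarith
      · intro x
        simp only [Pi.add_apply, Pi.smul_apply, smul_eq_mul]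
        have h1 := mul_le_mul_of_nonneg_left (hp2 x) ha
        have h2 := mul_le_mul_of_nonneg_left (hq2 x) hb
        have h3 : a * Pl m {x} + b * Pl m {x} = Pl m {x} := by
          rw [← add_mul, hab, one_mul]
        linarith
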